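/- If a real β is weakly Chaitin T-random and strictly T-compressible (for some T ∈ (0,1]), then there exists d ≥ 2 such that the base-two expansion of β has neither a run of d consecutive zeros nor a run of d consecutive ones. -/

import Mathlib

open Filter

/-- A set of binary strings is prefix-free if no member is a proper prefix of another. -/
def PrefixFreeSet (S : Set (List Bool)) : Prop :=
  ∀ p ∈ S, ∀ q ∈ S, p <+: q → p = q

/-- A prefix-free machine: a partial recursive function on binary strings
whose domain is prefix-free. -/
structure PrefixFreeMachine where
  F : List Bool →. List Bool
  partrec : Partrec F
  prefixFree : PrefixFreeSet F.Dom

/-- Optimality of a prefix-free machine. -/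
def PrefixFreeMachine.Optimal (V : PrefixFreeMachine) : Prop :=
  ∀ F : PrefixFreeMachine, ∃ d : ℕ, ∀ p ∈ F.F.Dom,
    ∃ q ∈ V.F.Dom, V.F q = F.F p ∧ q.length ≤ p.length + d

/-- The program-size complexity of `s` with respect to the machine `M`
(`⊤` if `s` is not in the range of `M`). -/
noncomputable def Hm (M : PrefixFreeMachine) (s : List Bool) : ℕ∞ :=
  sInf ((fun p : List Bool => (p.length : ℕ∞)) '' {p | s ∈ M.F p})

/-- The complexity, viewed in the extended reals. -/
noncomputable def HmE (M : PrefixFreeMachine) (s : List Bool) : EReal :=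
  if h : Hm M s = ⊤ then ⊤ else (((Hm M s).untop h : ℕ) : EReal)

/-- The `i`-th bit (starting from `i = 0`) of the base-two expansion of the
fractional part of `α`, chosen with infinitely many zeros. -/
noncomputable def rbit (α : ℝ) (i : ℕ) : Bool :=
  decide (⌊Int.fract α * 2 ^ (i + 1)⌋ % 2 = 1)

/-- The first `n` bits of the base-two expansion of `α - ⌊α⌋`. -/
noncomputable def restr (α : ℝ) (n : ℕ) : List Bool :=
  (List.range n).map (rbit α)


lemma restr_append_run (α : ℝ) (m j : ℕ) (b : Bool)
    (h : ∀ i < j, rbit α (m + i) = b) :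
    restr α (m + j) = restr α m ++ List.replicate j b := by
  unfold restr
  rw [List.range_add, List.map_append, List.map_map]
  congr 1
  apply List.eq_replicate_iff.2
  refine ⟨by simp, ?_⟩
  intro x hx
  simp only [List.mem_map, List.mem_range, Function.comp] at hx
  obtain ⟨i, hi, rfl⟩ := hx
  exact h i hi

theorem bounded_runs (U : PrefixFreeMachine) (hU : U.Optimal) (T : ℝ)
    (hT0 : 0 < T) (hT1 : T ≤ 1) (β : ℝ)
    (hrand : ∃ c : ℕ, ∀ n : ℕ, 1 ≤ n →
      ((T * n - c : ℝ) : EReal) ≤ HmE U (restr β n))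
    (hcomp : ∃ d' : ℕ, ∀ n : ℕ, 1 ≤ n →
      HmE U (restr β n) ≤ ((T * n + d' : ℝ) : EReal))
    (hlem : ∃ c : ℕ, 0 < c ∧ ∀ s : List Bool,
      HmE U (s ++ List.replicate c false) ≤ HmE U s + ((T * c - 1 : ℝ) : EReal) ∧
      HmE U (s ++ List.replicate c true) ≤ HmE U s + ((T * c - 1 : ℝ) : EReal)) :
    ∃ d : ℕ, 2 ≤ d ∧
      (¬ ∃ m : ℕ, ∀ i < d, rbit β (m + i) = false) ∧
      (¬ ∃ m : ℕ, ∀ i < d, rbit β (m + i) = true) :=  by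
  obtain ⟨cr, hrand⟩ := hrand
  obtain ⟨d', hcomp⟩ := hcomp
  obtain ⟨c, hc, hlem⟩ := hlem
  have hlemb : ∀ (b : Bool) (s : List Bool),
      HmE U (s ++ List.replicate c b) ≤ HmE U s + ((T * c - 1 : ℝ) : EReal) := by
    intro b s; cases b
    · exact (hlem s).1
    · exact (hlem s).2
  set k := cr + d' + 1 with hk
  have hkc : 1 ≤ k * c := Nat.one_le_iff_ne_zero.2 (by positivity)
  have key : ∀ b : Bool, ¬ ∃ m : ℕ, ∀ i < k * c + 1, rbit β (m + i) = b := by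
    rintro b ⟨m, hm⟩
    set m' := m + 1 with hm'
    have hbits : ∀ i < k * c, rbit β (m' + i) = b := by
      intro i hi
      have := hm (i + 1) (by omega)
      rwa [show m + (i + 1) = m' + i from by omega] at this
    have ind : ∀ j : ℕ, (∀ i < j * c, rbit β (m' + i) = b) →
        HmE U (restr β (m' + j * c)) ≤
          HmE U (restr β m') + (((j : ℝ) * (T * c - 1) : ℝ) : EReal) := by
      intro j
      induction j with
      | zero => intro _; simp
      | succ j ih =>
        intro hj
        have h1 : restr β (m' + (j + 1) * c) = restr β (m' + j * c) ++ List.replicate c b := by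
          rw [show m' + (j + 1) * c = (m' + j * c) + c from by ring]
          apply restr_append_run
          intro i hi
          have := hj (j * c + i) (by nlinarith [hi])
          rwa [show m' + (j * c + i) = m' + j * c + i from by omega] at this
        rw [h1]
        calc HmE U (restr β (m' + j * c) ++ List.replicate c b)
            ≤ HmE U (restr β (m' + j * c)) + ((T * c - 1 : ℝ) : EReal) := hlemb b _
          _ ≤ (HmE U (restr β m') + (((j : ℝ) * (T * c - 1) : ℝ) : EReal))
                + ((T * c - 1 : ℝ) : EReal) := by
              refine add_le_add_left (ih ?_) _
              intro i hi; exact hj i (by nlinarith [hi])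
          _ = HmE U (restr β m') + ((((j + 1 : ℕ) : ℝ) * (T * c - 1) : ℝ) : EReal) := by
              rw [add_assoc, ← EReal.coe_add]
              congr 2
              push_cast
              ring
    have hmain := ind k hbits
    have h1 : ((T * (m' + k * c : ℕ) - cr : ℝ) : EReal) ≤ HmE U (restr β (m' + k * c)) :=
      hrand (m' + k * c) (by omega)
    have h2 : HmE U (restr β m') ≤ ((T * m' + d' : ℝ) : EReal) := hcomp m' (by omega)
    have h3 : HmE U (restr β m') + (((k : ℝ) * (T * c - 1) : ℝ) : EReal)
        ≤ ((T * m' + d' + (k : ℝ) * (T * c - 1) : ℝ) : EReal) := by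
      rw [show ((T * m' + d' + (k : ℝ) * (T * c - 1) : ℝ) : EReal)
          = ((T * m' + d' : ℝ) : EReal) + (((k : ℝ) * (T * c - 1) : ℝ) : EReal) from
        (EReal.coe_add _ _)]
      exact add_le_add_left h2 _
    have hfin : ((T * (m' + k * c : ℕ) - cr : ℝ) : EReal)
        ≤ ((T * m' + d' + (k : ℝ) * (T * c - 1) : ℝ) : EReal) :=
      le_trans h1 (le_trans hmain h3)
    rw [EReal.coe_le_coe_iff] at hfin
    have hcast : ((m' + k * c : ℕ) : ℝ) = (m' : ℝ) + (k : ℝ) * (c : ℝ) := by push_cast; ring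
    rw [hcast] at hfin
    have hkr : ((k : ℕ) : ℝ) = (cr : ℝ) + (d' : ℝ) + 1 := by rw [hk]; push_cast; ring
    nlinarith [hfin, hkr]
  exact ⟨k * c + 1, by omega, key false, key true⟩
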